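/- On the space W⊗Λ of exterior-form-valued polynomials, the Fedosov operators satisfy the homotopy identity a = (δ ∘ δ⁻¹ + δ⁻¹ ∘ δ + σ)(a) for every a ∈ W⊗Λ, where σ(a) is the bihomogeneous component of a of polynomial degree 0 and exterior degree 0. -/

import Mathlib

open scoped BigOperators

noncomputable section

/-- The space `W⊗Λ = ℝ[z¹,…,zᵐ] ⊗ Λ^•(ℝᵐ)^*` of exterior-form–valued polynomials,
encoded via the basis `ε^S = ε^{α₁} ∧ ⋯ ∧ ε^{α_q}` (for `S = {α₁ < ⋯ < α_q}`) of
`Λ^•(ℝᵐ)^*`: an element is the family of its polynomial components indexed by `S`. -/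
abbrev WLam (m : ℕ) := Finset (Fin m) → MvPolynomial (Fin m) ℝ

/-- The sign `(−1)^{#{β ∈ S : β < α}}` arising from `ε^α ∧ ε^{S \ {α}} = ± ε^S`
and `ι_{e_α} ε^S = ± ε^{S \ {α}}`. -/
def fsign {m : ℕ} (α : Fin m) (S : Finset (Fin m)) : ℝ :=
  (-1 : ℝ) ^ (S.filter (· < α)).card

/-- The Fedosov operator `δ(P ⊗ ω) = Σ_α (∂P/∂z^α) ⊗ (ε^α ∧ ω)`. -/
def fdel {m : ℕ} (a : WLam m) : WLam m := fun S =>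
  ∑ α ∈ S, fsign α S • MvPolynomial.pderiv α (a (S.erase α))

/-- The Fedosov operator `δ⁻¹`: on a bihomogeneous element `P ⊗ ω` with `P` of
polynomial degree `p` and `ω` of exterior degree `q`,
`δ⁻¹(P ⊗ ω) = (1/(p+q)) Σ_α (z^α P) ⊗ ι_{e_α} ω` for `p + q > 0`, and `0` for
`p = q = 0`, extended linearly. -/
def fdelInv {m : ℕ} (a : WLam m) : WLam m := fun S =>
  ∑ α ∈ Sᶜ, fsign α S •
    ∑ p ∈ Finset.range ((a (insert α S)).totalDegree + 1),
      (((p + (insert α S).card : ℕ) : ℝ))⁻¹ •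
        (MvPolynomial.X α * MvPolynomial.homogeneousComponent p (a (insert α S)))

/-- The projection `σ` onto the bihomogeneous component of polynomial degree `0`
and exterior degree `0`. -/
def fsig {m : ℕ} (a : WLam m) : WLam m := fun S =>
  if S = (∅ : Finset (Fin m)) then MvPolynomial.C (MvPolynomial.coeff 0 (a ∅)) else 0

/-! ### Auxiliary lemmas -/

lemma coeff_pderiv' {m : ℕ} (i : Fin m) (f : MvPolynomial (Fin m) ℝ) (d : Fin m →₀ ℕ) :
    MvPolynomial.coeff d (MvPolynomial.pderiv i f)
      = ((d i + 1 : ℕ) : ℝ) * MvPolynomial.coeff (d + Finsupp.single i 1) f := by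
  open MvPolynomial Finsupp in
  induction f using MvPolynomial.induction_on' with
  | add p q hp hq => simp [hp, hq, mul_add]
  | monomial s a =>
    rw [pderiv_monomial, coeff_monomial, coeff_monomial]
    by_cases h : s = d + Finsupp.single i 1
    · subst h
      have h1 : d + Finsupp.single i 1 - Finsupp.single i 1 = d := add_tsub_cancel_right _ _
      simp [h1, mul_comm]
    · rw [if_neg h]
      by_cases hsi : s i = 0
      · by_cases h2 : s - Finsupp.single i 1 = d <;> simp [h2, hsi]
      · have h2 : s - Finsupp.single i 1 ≠ d := by
          intro h2
          apply h
          rw [← h2]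
          ext x
          by_cases hx : x = i
          · subst hx; simp [Nat.sub_add_cancel (Nat.one_le_iff_ne_zero.mpr hsi)]
          · simp [Finsupp.single_apply, Ne.symm hx]
        simp [h2]

lemma fsign_mul_self {m : ℕ} (α : Fin m) (S : Finset (Fin m)) :
    fsign α S * fsign α S = 1 := by
  unfold fsign; rw [← pow_add]; exact Even.neg_one_pow ⟨_, rfl⟩

lemma fsign_erase_self {m : ℕ} (α : Fin m) (S : Finset (Fin m)) :
    fsign α (S.erase α) = fsign α S := by
  unfold fsign
  congr 2
  rw [Finset.filter_erase, Finset.erase_eq_of_notMem (by simp)]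

lemma fsign_insert_self {m : ℕ} (β : Fin m) (S : Finset (Fin m)) :
    fsign β (insert β S) = fsign β S := by
  unfold fsign
  rw [Finset.filter_insert, if_neg (lt_irrefl β)]

lemma fsign_cross {m : ℕ} {α β : Fin m} {S : Finset (Fin m)} (hα : α ∈ S) (hβ : β ∉ S) :
    fsign α S * fsign β (S.erase α) + fsign β S * fsign α (insert β S) = 0 := by
  have hne : α ≠ β := fun h => hβ (h ▸ hα)
  rcases hne.lt_or_gt with hlt | hlt
  · have h1 : fsign α (insert β S) = fsign α S := by
      unfold fsign
      rw [Finset.filter_insert, if_neg (by exact not_lt.mpr hlt.le)]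
    have h2 : fsign β (S.erase α) = - fsign β S := by
      unfold fsign
      rw [Finset.filter_erase, Finset.card_erase_of_mem (by simp [hα, hlt])]
      have hc : 0 < (S.filter (· < β)).card := Finset.card_pos.mpr ⟨α, by simp [hα, hlt]⟩
      obtain ⟨c, hc'⟩ := Nat.exists_eq_add_of_le hc
      rw [hc']
      simp [pow_add, pow_succ]
    rw [h1, h2]; ring
  · have h1 : fsign β (S.erase α) = fsign β S := by
      unfold fsign
      rw [Finset.filter_erase, Finset.erase_eq_of_notMem (by simp [not_lt.mpr hlt.le])]
    have h2 : fsign α (insert β S) = - fsign α S := by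
      unfold fsign
      rw [Finset.filter_insert, if_pos hlt,
        Finset.card_insert_of_notMem (by simp [hβ]), pow_succ]
      ring
    rw [h1, h2]; ring

lemma degree_add' {m : ℕ} (u v : Fin m →₀ ℕ) : (u + v).degree = u.degree + v.degree := by
  simp [Finsupp.degree_eq_weight_one]

lemma degree_single_one {m : ℕ} (α : Fin m) : (Finsupp.single α 1).degree = 1 := by
  rw [Finsupp.degree_apply, Finsupp.support_single_ne_zero _ one_ne_zero]
  simp

lemma sub_single_add {m : ℕ} {e : Fin m →₀ ℕ} {α : Fin m} (h : α ∈ e.support) :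
    e - Finsupp.single α 1 + Finsupp.single α 1 = e := by
  ext x
  by_cases hx : x = α
  · subst hx
    simp [Nat.sub_add_cancel (Nat.one_le_iff_ne_zero.mpr (Finsupp.mem_support_iff.mp h))]
  · simp [Finsupp.single_apply, Ne.symm hx]

lemma add_single_sub_single {m : ℕ} (d : Fin m →₀ ℕ) {α β : Fin m} (hne : α ≠ β) :
    d + Finsupp.single α 1 - Finsupp.single β 1
      = d - Finsupp.single β 1 + Finsupp.single α 1 := by
  ext x
  simp only [Finsupp.coe_add, Finsupp.coe_tsub, Pi.add_apply, Pi.sub_apply,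
    Finsupp.single_apply]
  split_ifs with h1 h2 <;>
    first
      | exact absurd (h1.trans h2.symm) hne
      | omega

lemma sub_single_apply_ne {m : ℕ} (d : Fin m →₀ ℕ) {α β : Fin m} (hne : α ≠ β) :
    (d - Finsupp.single β 1 : Fin m →₀ ℕ) α = d α := by
  simp [Finsupp.single_apply, Ne.symm hne]

lemma coeff_inner {m : ℕ} (k : ℕ) (α : Fin m) (f : MvPolynomial (Fin m) ℝ) (e : Fin m →₀ ℕ) :
    MvPolynomial.coeff e (∑ p ∈ Finset.range (f.totalDegree + 1),
        (((p + k : ℕ) : ℝ))⁻¹ • (MvPolynomial.X α * MvPolynomial.homogeneousComponent p f))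
    = if α ∈ e.support then
        (((e.degree - 1 + k : ℕ) : ℝ))⁻¹ * MvPolynomial.coeff (e - Finsupp.single α 1) f
      else 0 := by
  rw [MvPolynomial.coeff_sum]
  simp_rw [MvPolynomial.coeff_smul, MvPolynomial.coeff_X_mul']
  by_cases hα : α ∈ e.support
  · simp only [if_pos hα, MvPolynomial.coeff_homogeneousComponent, smul_ite, smul_zero,
      smul_eq_mul]
    simp_rw [mul_ite, mul_zero]
    rw [Finset.sum_ite_eq]
    have hdeg : (e - Finsupp.single α 1).degree = e.degree - 1 := by
      have h1 := degree_add' (e - Finsupp.single α 1) (Finsupp.single α 1)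
      rw [sub_single_add hα, degree_single_one] at h1
      omega
    by_cases hq : (e - Finsupp.single α 1).degree ∈ Finset.range (f.totalDegree + 1)
    · rw [if_pos hq, hdeg]
    · rw [if_neg hq]
      have : MvPolynomial.coeff (e - Finsupp.single α 1) f = 0 := by
        apply MvPolynomial.coeff_eq_zero_of_totalDegree_lt
        have := Finset.mem_range.not.mp hq
        have h2 : f.totalDegree < (e - Finsupp.single α 1).degree := by omega
        exact h2
      rw [this, mul_zero]
  · simp [hα]

/-! ### The cross and diagonal terms -/

def Xterm {m : ℕ} (a : WLam m) (S : Finset (Fin m)) (d : Fin m →₀ ℕ) (α β : Fin m) : ℝ :=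
  fsign α S * fsign β (S.erase α) * ((d α + 1 : ℕ) : ℝ) *
    (if β ∈ (d + Finsupp.single α 1).support then
      ((d.degree + S.card : ℕ) : ℝ)⁻¹ *
        MvPolynomial.coeff (d + Finsupp.single α 1 - Finsupp.single β 1)
          (a (insert β (S.erase α)))
    else 0)

def Yterm {m : ℕ} (a : WLam m) (S : Finset (Fin m)) (d : Fin m →₀ ℕ) (α β : Fin m) : ℝ :=
  if β ∈ d.support then
    fsign β S * ((d.degree + S.card : ℕ) : ℝ)⁻¹ *
      (fsign α (insert β S) * (((d - Finsupp.single β 1 : Fin m →₀ ℕ) α + 1 : ℕ) : ℝ) *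
        MvPolynomial.coeff (d - Finsupp.single β 1 + Finsupp.single α 1)
          (a ((insert β S).erase α)))
  else 0

lemma hT1 {m : ℕ} (a : WLam m) (S : Finset (Fin m)) (d : Fin m →₀ ℕ) :
    MvPolynomial.coeff d (fdel (fdelInv a) S)
      = ∑ α ∈ S, ∑ β ∈ (S.erase α)ᶜ, Xterm a S d α β := by
  simp only [fdel]
  rw [MvPolynomial.coeff_sum]
  refine Finset.sum_congr rfl (fun α hα => ?_)
  rw [MvPolynomial.coeff_smul, smul_eq_mul, coeff_pderiv']
  simp only [fdelInv]
  rw [MvPolynomial.coeff_sum, Finset.mul_sum, Finset.mul_sum]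
  refine Finset.sum_congr rfl (fun β hβ => ?_)
  rw [MvPolynomial.coeff_smul, smul_eq_mul, coeff_inner]
  have hcard : (insert β (S.erase α)).card = S.card := by
    rw [Finset.card_insert_of_notMem (Finset.mem_compl.mp hβ),
      Finset.card_erase_of_mem hα]
    have : 1 ≤ S.card := Finset.card_pos.mpr ⟨α, hα⟩
    omega
  rw [hcard, degree_add' d (Finsupp.single α 1), degree_single_one, Nat.add_sub_cancel]
  unfold Xterm
  ring

lemma hT2 {m : ℕ} (a : WLam m) (S : Finset (Fin m)) (d : Fin m →₀ ℕ) :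
    MvPolynomial.coeff d (fdelInv (fdel a) S)
      = ∑ β ∈ Sᶜ, ∑ α ∈ insert β S, Yterm a S d α β := by
  simp only [fdelInv]
  rw [MvPolynomial.coeff_sum]
  refine Finset.sum_congr rfl (fun β hβ => ?_)
  rw [MvPolynomial.coeff_smul, smul_eq_mul, coeff_inner]
  by_cases hs : β ∈ d.support
  · rw [if_pos hs]
    have hd1 : 1 ≤ d.degree :=
      le_trans (Nat.one_le_iff_ne_zero.mpr (Finsupp.mem_support_iff.mp hs))
        (Finsupp.le_degree β d)
    have hcard : (insert β S).card = S.card + 1 :=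
      Finset.card_insert_of_notMem (Finset.mem_compl.mp hβ)
    rw [hcard]
    have he : d.degree - 1 + (S.card + 1) = d.degree + S.card := by omega
    rw [he]
    simp only [fdel]
    rw [MvPolynomial.coeff_sum, Finset.mul_sum, Finset.mul_sum]
    refine Finset.sum_congr rfl (fun α hα => ?_)
    rw [MvPolynomial.coeff_smul, smul_eq_mul, coeff_pderiv']
    unfold Yterm
    rw [if_pos hs]
    ring
  · rw [if_neg hs, mul_zero]
    exact (Finset.sum_eq_zero (fun α _ => by unfold Yterm; rw [if_neg hs])).symm

lemma diag1 {m : ℕ} (a : WLam m) {S : Finset (Fin m)} (d : Fin m →₀ ℕ) {α : Fin m}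
    (hα : α ∈ S) :
    Xterm a S d α α
      = ((d α + 1 : ℕ) : ℝ) * (((d.degree + S.card : ℕ) : ℝ)⁻¹
          * MvPolynomial.coeff d (a S)) := by
  unfold Xterm
  have hmem : α ∈ (d + Finsupp.single α 1).support := by
    simp [Finsupp.mem_support_iff, Finsupp.single_apply]
  rw [if_pos hmem, add_tsub_cancel_right, Finset.insert_erase hα, fsign_erase_self]
  rw [show fsign α S * fsign α S * ((d α + 1 : ℕ) : ℝ) *
      (((d.degree + S.card : ℕ) : ℝ)⁻¹ * MvPolynomial.coeff d (a S))
      = (fsign α S * fsign α S) * (((d α + 1 : ℕ) : ℝ) *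
        (((d.degree + S.card : ℕ) : ℝ)⁻¹ * MvPolynomial.coeff d (a S))) from by ring,
    fsign_mul_self, one_mul]

lemma diag2 {m : ℕ} (a : WLam m) {S : Finset (Fin m)} (d : Fin m →₀ ℕ) {β : Fin m}
    (hβ : β ∉ S) :
    Yterm a S d β β
      = ((d β : ℕ) : ℝ) * (((d.degree + S.card : ℕ) : ℝ)⁻¹
          * MvPolynomial.coeff d (a S)) := by
  unfold Yterm
  by_cases hs : β ∈ d.support
  · rw [if_pos hs, Finset.erase_insert hβ, fsign_insert_self, sub_single_add hs]
    have hv : (d - Finsupp.single β 1 : Fin m →₀ ℕ) β + 1 = d β := by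
      have h1 : 1 ≤ d β := Nat.one_le_iff_ne_zero.mpr (Finsupp.mem_support_iff.mp hs)
      rw [Finsupp.tsub_apply, Finsupp.single_apply, if_pos rfl]
      omega
    rw [hv]
    rw [show fsign β S * ((d.degree + S.card : ℕ) : ℝ)⁻¹ *
        (fsign β S * ((d β : ℕ) : ℝ) * MvPolynomial.coeff d (a S))
        = (fsign β S * fsign β S) * (((d β : ℕ) : ℝ) *
          (((d.degree + S.card : ℕ) : ℝ)⁻¹ * MvPolynomial.coeff d (a S))) from by ring,
      fsign_mul_self, one_mul]
  · rw [if_neg hs]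
    have : d β = 0 := Finsupp.notMem_support_iff.mp hs
    rw [this]
    simp

lemma cross_cancel {m : ℕ} (a : WLam m) {S : Finset (Fin m)} (d : Fin m →₀ ℕ) {α β : Fin m}
    (hα : α ∈ S) (hβ : β ∉ S) :
    Xterm a S d α β + Yterm a S d α β = 0 := by
  have hne : α ≠ β := fun h => hβ (h ▸ hα)
  have happ : (d + Finsupp.single α 1 : Fin m →₀ ℕ) β = d β := by
    simp [Finsupp.single_apply, hne]
  by_cases hs : β ∈ d.support
  · unfold Xterm Yterm
    have hmem : β ∈ (d + Finsupp.single α 1).support := by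
      rw [Finsupp.mem_support_iff, happ]
      exact Finsupp.mem_support_iff.mp hs
    rw [if_pos hmem, if_pos hs, Finset.erase_insert_of_ne (fun h => hne h.symm),
      add_single_sub_single d hne, sub_single_apply_ne d hne]
    linear_combination (((d α + 1 : ℕ) : ℝ) * ((d.degree + S.card : ℕ) : ℝ)⁻¹ *
      MvPolynomial.coeff (d - Finsupp.single β 1 + Finsupp.single α 1)
        (a (insert β (S.erase α)))) * fsign_cross hα hβ
  · unfold Xterm Yterm
    have hmem : β ∉ (d + Finsupp.single α 1).support := by
      rw [Finsupp.mem_support_iff, happ]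
      simpa [Finsupp.mem_support_iff] using hs
    rw [if_neg hmem, if_neg hs, mul_zero, add_zero]

/-- The Fedosov homotopy identity `a = (δ δ⁻¹ + δ⁻¹ δ + σ)(a)` on `W⊗Λ`. -/
theorem fedosov_homotopy_identity {m : ℕ} :
    ∀ a : WLam m, fdel (fdelInv a) + fdelInv (fdel a) + fsig a = a := by
  intro a
  funext S
  apply MvPolynomial.ext
  intro d
  simp only [Pi.add_apply, MvPolynomial.coeff_add]
  rw [hT1, hT2]
  have h1 : ∑ α ∈ S, ∑ β ∈ (S.erase α)ᶜ, Xterm a S d α β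
      = (∑ α ∈ S, Xterm a S d α α) + ∑ α ∈ S, ∑ β ∈ Sᶜ, Xterm a S d α β := by
    rw [← Finset.sum_add_distrib]
    refine Finset.sum_congr rfl (fun α hα => ?_)
    rw [Finset.compl_erase, Finset.sum_insert (by simp [hα])]
  have h2 : ∑ β ∈ Sᶜ, ∑ α ∈ insert β S, Yterm a S d α β
      = (∑ β ∈ Sᶜ, Yterm a S d β β) + ∑ β ∈ Sᶜ, ∑ α ∈ S, Yterm a S d α β := by
    rw [← Finset.sum_add_distrib]
    refine Finset.sum_congr rfl (fun β hβ => ?_)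
    rw [Finset.sum_insert (Finset.mem_compl.mp hβ)]
  rw [h1, h2]
  have hcross : (∑ α ∈ S, ∑ β ∈ Sᶜ, Xterm a S d α β)
      + (∑ β ∈ Sᶜ, ∑ α ∈ S, Yterm a S d α β) = 0 := by
    rw [Finset.sum_comm (s := Sᶜ) (t := S)]
    rw [← Finset.sum_add_distrib]
    refine Finset.sum_eq_zero (fun α hα => ?_)
    rw [← Finset.sum_add_distrib]
    exact Finset.sum_eq_zero (fun β hβ =>
      cross_cancel a d hα (Finset.mem_compl.mp hβ))
  have hdiag : (∑ α ∈ S, Xterm a S d α α) + (∑ β ∈ Sᶜ, Yterm a S d β β)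
      = ((d.degree + S.card : ℕ) : ℝ) *
          (((d.degree + S.card : ℕ) : ℝ)⁻¹ * MvPolynomial.coeff d (a S)) := by
    rw [Finset.sum_congr rfl (fun α hα => diag1 a d hα),
      Finset.sum_congr rfl (fun β hβ => diag2 a d (Finset.mem_compl.mp hβ))]
    rw [← Finset.sum_mul, ← Finset.sum_mul, ← add_mul]
    congr 1
    rw [← Nat.cast_sum, ← Nat.cast_sum, ← Nat.cast_add]
    congr 1
    have hsum : ∑ α ∈ S, d α + ∑ β ∈ Sᶜ, d β = d.degree := by
      rw [Finset.sum_add_sum_compl]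
      rw [Finsupp.degree_apply]
      exact (Finset.sum_subset (Finset.subset_univ _)
        (fun x _ hx => Finsupp.notMem_support_iff.mp hx)).symm
    have hsum2 : ∑ α ∈ S, (d α + 1) = ∑ α ∈ S, d α + S.card := by
      rw [Finset.sum_add_distrib]
      simp
    omega
  calc (∑ α ∈ S, Xterm a S d α α) + (∑ α ∈ S, ∑ β ∈ Sᶜ, Xterm a S d α β)
        + ((∑ β ∈ Sᶜ, Yterm a S d β β) + ∑ β ∈ Sᶜ, ∑ α ∈ S, Yterm a S d α β)
        + MvPolynomial.coeff d (fsig a S)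
      = ((∑ α ∈ S, Xterm a S d α α) + (∑ β ∈ Sᶜ, Yterm a S d β β))
        + ((∑ α ∈ S, ∑ β ∈ Sᶜ, Xterm a S d α β)
          + (∑ β ∈ Sᶜ, ∑ α ∈ S, Yterm a S d α β))
        + MvPolynomial.coeff d (fsig a S) := by ring
    _ = ((d.degree + S.card : ℕ) : ℝ) *
          (((d.degree + S.card : ℕ) : ℝ)⁻¹ * MvPolynomial.coeff d (a S))
        + MvPolynomial.coeff d (fsig a S) := by rw [hcross, hdiag, add_zero]
    _ = MvPolynomial.coeff d (a S) := by
        by_cases hn : d.degree + S.card = 0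
        · have hS : S = ∅ := Finset.card_eq_zero.mp (by omega)
          have hd : d = 0 := (Finsupp.degree_eq_zero_iff d).mp (by omega)
          subst hS hd
          simp [fsig]
        · have hne : ((d.degree + S.card : ℕ) : ℝ) ≠ 0 := Nat.cast_ne_zero.mpr hn
          rw [← mul_assoc, mul_inv_cancel₀ hne, one_mul]
          have hz : MvPolynomial.coeff d (fsig a S) = 0 := by
            simp only [fsig]
            by_cases hS : S = ∅
            · rw [if_pos hS]
              have hd : d ≠ 0 := by
                intro h
                apply hn
                rw [h, map_zero, hS]
                simp
              rw [MvPolynomial.coeff_C, if_neg (fun h => hd h.symm)]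
            · rw [if_neg hS]
              simp
          rw [hz, add_zero]
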